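/- Let A be an associative algebra with commuting linear maps L, R satisfying L(ab) = L(a)b, R(ab) = aR(b). Define a ∘₁ b := (aR)∘b − a∘(Lb) where ∘ is the original product and aR := R(a), Lb := L(b). Augment A with an element ν, setting ν ∘₁ ν := 0, ν ∘₁ a := La, a ∘₁ ν := −aR. Then the resulting algebra (A ⊕ span(ν), ∘₁) is weakly nonassociative with nucleus exactly containing A, and the derived products satisfy ν ∘ₙ ν = 0, ν ∘ₙ a = Lⁿa, a ∘ₙ ν = −aRⁿ, and a ∘ₙ b = (aRⁿ)∘b − a∘(Lⁿb) for all n ≥ 1 and a,b ∈ A. -/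

import Mathlib

/-- The WNA product on `k × A` (the augmentation of the associative algebra `A` by `ν`):
`ν ∘₁ ν = 0`, `ν ∘₁ a = La`, `a ∘₁ ν = −aR`, `a ∘₁ b = (aR)∘b − a∘(Lb)`,
where `ν = (1,0)` and `A` is embedded as `a ↦ (0,a)`. -/
def wnaMul {k A : Type*} [CommRing k] [NonUnitalRing A] [Module k A]
    (L R : A →ₗ[k] A) : k × A → k × A → k × A :=
  fun x y => (0, x.1 • L y.2 - y.1 • R x.2 + R x.2 * y.2 - x.2 * L y.2)

/-- Derived products built from `ν = (1,0)`:
`wnaCirc L R (n-1) x y` is `x ∘ₙ y`. -/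
def wnaCirc {k A : Type*} [CommRing k] [NonUnitalRing A] [Module k A]
    (L R : A →ₗ[k] A) : ℕ → k × A → k × A → k × A
  | 0, x, y => wnaMul L R x y
  | n+1, x, y =>
      wnaMul L R x (wnaCirc L R n ((1 : k), (0 : A)) y)
        - wnaCirc L R n (wnaMul L R x ((1 : k), (0 : A))) y

/-- Let `A` be associative with commuting maps `L, R` satisfying `L(ab) = L(a)b`,
`R(ab) = aR(b)`. Then `A ⊕ span(ν)` with the product `∘₁` is weakly nonassociative,
its nucleus contains `A`, and the derived products satisfy `ν ∘ₙ ν = 0`,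
`ν ∘ₙ a = Lⁿa`, `a ∘ₙ ν = −aRⁿ`, `a ∘ₙ b = (aRⁿ)∘b − a∘(Lⁿb)` for all `n ≥ 1`. -/
theorem wna_augmentation {k A : Type*} [CommRing k] [NonUnitalRing A] [Module k A]
    [SMulCommClass k A A] [IsScalarTower k A A]
    (L R : A →ₗ[k] A) (hLR : ∀ a : A, L (R a) = R (L a))
    (hL : ∀ a b : A, L (a * b) = L a * b)
    (hR : ∀ a b : A, R (a * b) = a * R b) :
    (∀ x y z w : k × A,
      wnaMul L R (wnaMul L R x (wnaMul L R y z)) w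
        = wnaMul L R x (wnaMul L R (wnaMul L R y z) w)) ∧
    (∀ (a : A) (x z : k × A),
      wnaMul L R (wnaMul L R x ((0 : k), a)) z
        = wnaMul L R x (wnaMul L R ((0 : k), a) z)) ∧
    (∀ n : ℕ, wnaCirc L R n ((1 : k), (0 : A)) ((1 : k), (0 : A)) = 0) ∧
    (∀ (n : ℕ) (a : A),
      wnaCirc L R n ((1 : k), (0 : A)) ((0 : k), a) = ((0 : k), (⇑L)^[n+1] a)) ∧
    (∀ (n : ℕ) (a : A),
      wnaCirc L R n ((0 : k), a) ((1 : k), (0 : A)) = ((0 : k), -((⇑R)^[n+1] a))) ∧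
    (∀ (n : ℕ) (a b : A),
      wnaCirc L R n ((0 : k), a) ((0 : k), b)
        = ((0 : k), (⇑R)^[n+1] a * b - a * (⇑L)^[n+1] b)) := by
  -- nucleus property
  have hnuc : ∀ (a : A) (x z : k × A),
      wnaMul L R (wnaMul L R x ((0 : k), a)) z
        = wnaMul L R x (wnaMul L R ((0 : k), a) z) := by
    intro a x z
    obtain ⟨x1, x2⟩ := x
    obtain ⟨z1, z2⟩ := z
    simp only [wnaMul, Prod.mk.injEq]
    refine ⟨by simp, ?_⟩
    simp only [map_add, map_sub, map_neg, map_smul, hL, hR, hLR, zero_smul, smul_zero,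
        mul_add, add_mul, mul_sub, sub_mul, neg_mul, mul_neg, smul_mul_assoc, mul_smul_comm,
        mul_assoc, sub_zero, zero_sub, zero_mul, mul_zero, smul_neg,
        smul_add, smul_sub]
    module
  have key : ∀ n : ℕ,
      (wnaCirc L R n ((1 : k), (0 : A)) ((1 : k), (0 : A)) = 0) ∧
      (∀ a : A, wnaCirc L R n ((1 : k), (0 : A)) ((0 : k), a)
        = ((0 : k), (⇑L)^[n+1] a)) ∧
      (∀ a : A, wnaCirc L R n ((0 : k), a) ((1 : k), (0 : A))
        = ((0 : k), -((⇑R)^[n+1] a))) ∧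
      (∀ a b : A, wnaCirc L R n ((0 : k), a) ((0 : k), b)
        = ((0 : k), (⇑R)^[n+1] a * b - a * (⇑L)^[n+1] b)) := by
    intro n
    induction n with
    | zero =>
      refine ⟨?_, ?_, ?_, ?_⟩
      · simp [wnaCirc, wnaMul, Prod.ext_iff]
      · intro a; simp [wnaCirc, wnaMul, Prod.ext_iff]
      · intro a; simp [wnaCirc, wnaMul, Prod.ext_iff]
      · intro a b; simp [wnaCirc, wnaMul, Prod.ext_iff]
    | succ n ih =>
      obtain ⟨ih1, ih2, ih3, ih4⟩ := ih
      have hmul0r : ∀ x : k × A, wnaMul L R x 0 = 0 := by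
        intro x; simp [wnaMul, Prod.ext_iff]
      have hnuν : wnaMul L R ((1:k),(0:A)) ((1:k),(0:A)) = 0 := by
        simp [wnaMul, Prod.ext_iff]
      have hνa : ∀ a : A, wnaMul L R ((1:k),(0:A)) ((0:k), a) = ((0:k), L a) := by
        intro a; simp [wnaMul, Prod.ext_iff]
      have haν : ∀ a : A, wnaMul L R ((0:k), a) ((1:k),(0:A)) = ((0:k), -R a) := by
        intro a; simp [wnaMul, Prod.ext_iff]
      have hc0l : ∀ a b : A,
          wnaMul L R ((0:k),a) ((0:k),b) = ((0:k), R a * b - a * L b) := by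
        intro a b; simp [wnaMul, Prod.ext_iff]
      have hcz : wnaCirc L R n (0 : k × A) ((1:k),(0:A)) = 0 := by
        have := ih3 (0 : A)
        simp at this; exact this
      have hRneg : ∀ (m : ℕ) (x : A), (⇑R)^[m] (-x) = -((⇑R)^[m] x) := by
        intro m
        induction m with
        | zero => simp
        | succ m ihm => intro x; simp [Function.iterate_succ_apply', ihm]
      have hRsh : ∀ (m : ℕ) (x : A), (⇑R)^[m] (R x) = R ((⇑R)^[m] x) := by
        intro m x
        rw [← Function.iterate_succ_apply, Function.iterate_succ_apply']
      refine ⟨?_, ?_, ?_, ?_⟩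
      · show wnaMul L R _ (wnaCirc L R n _ _) - wnaCirc L R n (wnaMul L R _ _) _ = 0
        rw [ih1, hnuν, hmul0r, hcz, sub_zero]
      · intro a
        show wnaMul L R _ (wnaCirc L R n _ _) - wnaCirc L R n (wnaMul L R _ _) _ = _
        rw [ih2 a, hnuν, hνa]
        have h0 : wnaCirc L R n (0 : k × A) ((0:k), a) = 0 := by
          have := ih4 (0 : A) a
          simp at this; exact this
        rw [h0, sub_zero, Function.iterate_succ_apply' (⇑L) (n+1)]
      · intro a
        show wnaMul L R _ (wnaCirc L R n _ _) - wnaCirc L R n (wnaMul L R _ _) _ = _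
        rw [ih1, haν, hmul0r, ih3 (-R a)]
        simp [hRneg, hRsh, Function.iterate_succ_apply', Prod.ext_iff]
      · intro a b
        show wnaMul L R _ (wnaCirc L R n _ _) - wnaCirc L R n (wnaMul L R _ _) _ = _
        rw [ih2 b, haν, ih4 (-R a) b, hc0l]
        simp only [hRneg, hRsh, Function.iterate_succ_apply', map_neg, Prod.mk_sub_mk,
          Prod.ext_iff, Prod.mk.injEq]
        refine ⟨by ring, ?_⟩
        simp only [neg_mul, mul_neg, sub_neg_eq_add, neg_neg]
        abel
  exact ⟨fun x y z w => hnuc (wnaMul L R y z).2 x w, hnuc,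
    fun n => (key n).1, fun n => (key n).2.1, fun n => (key n).2.2.1,
    fun n a b => (key n).2.2.2 a b⟩
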